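/- Let t ≥ 1 and q ≥ 1 be natural numbers, let σ be a permutation of Fin t, and let O be a q×q complex matrix. Then Σ_{f : Fin t → Fin q} ∏_{i ∈ Fin t} O (f i) (f (σ i)) = (tr O)^{f₀} · ∏_{ℓ ∈ cycleType(σ)} tr(O^ℓ), where f₀ is the number of fixed points of σ and the product runs over the multiset of nontrivial cycle lengths of σ. (Equivalently: the trace of the composition of the permutation operator of σ with O^{⊗t} on (ℂ^q)^{⊗t} is the product over the orbits of σ of tr(O^{orbit length}).) -/

import Mathlib

open Finset Equiv Equiv.Perm

variable {q : ℕ} (O : Matrix (Fin q) (Fin q) ℂ)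

lemma path_sum : ∀ (n : ℕ) (x y : Fin q),
    (O ^ (n+1)) x y
      = ∑ g : Fin n → Fin q, ∏ k : Fin (n+1),
          O ((Fin.cons x g : Fin (n+1) → Fin q) k) ((Fin.snoc g y : Fin (n+1) → Fin q) k)
  | 0, x, y => by
      simp [Fin.snoc]
  | (n+1), x, y => by
      rw [pow_succ', Matrix.mul_apply]
      have := fun z => path_sum n z y
      simp_rw [this]
      rw [← Equiv.sum_comp (Fin.consEquiv (fun _ : Fin (n+1) => Fin q))
        (fun g' => ∏ k : Fin (n+2),
          O ((Fin.cons x g' : Fin (n+2) → Fin q) k) ((Fin.snoc g' y : Fin (n+2) → Fin q) k))]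
      rw [Fintype.sum_prod_type]
      refine Finset.sum_congr rfl fun z _ => ?_
      rw [Finset.mul_sum]
      refine Finset.sum_congr rfl fun g _ => ?_
      have hc : ((Fin.consEquiv (fun _ : Fin (n+1) => Fin q)) (z, g) : Fin (n+1) → Fin q)
          = Fin.cons z g := rfl
      rw [hc, ← Fin.cons_snoc_eq_snoc_cons]
      conv_rhs => rw [Fin.prod_univ_succ]
      simp only [Fin.cons_zero, Fin.cons_succ]

lemma cyclic_sum (n : ℕ) :
    ∑ g : Fin (n+1) → Fin q, ∏ k : Fin (n+1), O (g k) (g (k+1)) = (O ^ (n+1)).trace := by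
  have htr : (O ^ (n+1)).trace = ∑ x : Fin q, (O ^ (n+1)) x x := rfl
  rw [htr]
  simp_rw [path_sum O n]
  rw [← Equiv.sum_comp (Fin.consEquiv (fun _ : Fin (n+1) => Fin q))
    (fun h => ∏ k : Fin (n+1), O (h k) (h (k+1))), Fintype.sum_prod_type]
  refine Finset.sum_congr rfl fun x _ => Finset.sum_congr rfl fun g _ => ?_
  have hc : ((Fin.consEquiv (fun _ : Fin (n+1) => Fin q)) (x, g) : Fin (n+1) → Fin q)
      = Fin.cons x g := rfl
  rw [hc]
  refine Finset.prod_congr rfl fun k _ => ?_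
  induction k using Fin.lastCases with
  | last =>
      rw [Fin.last_add_one, Fin.cons_zero, Fin.snoc_last]
  | cast j =>
      rw [Fin.coeSucc_eq_succ, Fin.cons_succ, Fin.snoc_castSucc]

lemma base_sum (α : Type) [Fintype α] [DecidableEq α] :
    ∑ f : α → Fin q, ∏ i, O (f i) (f i) = O.trace ^ Fintype.card α := by
  have htr : O.trace = ∑ x : Fin q, O x x := rfl
  rw [htr, ← Finset.card_univ, ← Finset.prod_const,
    Finset.prod_univ_sum (fun _ : α => Finset.univ) (fun _ x => O x x),
    Fintype.piFinset_univ]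

lemma sum_split {α : Type} [Fintype α] [DecidableEq α] (σ : Equiv.Perm α)
    (p : α → Prop) [DecidablePred p] (hp : ∀ x, p x ↔ p (σ x)) :
    ∑ f : α → Fin q, ∏ i, O (f i) (f (σ i)) =
      (∑ g : {x // p x} → Fin q, ∏ i, O (g i) (g (σ.subtypePerm (fun x => (hp x).symm) i))) *
      (∑ g : {x // ¬ p x} → Fin q,
        ∏ i, O (g i) (g (σ.subtypePerm (fun x => not_congr (hp x).symm) i))) := by
  set e : ({x // p x} → Fin q) × ({x // ¬p x} → Fin q) ≃ (α → Fin q) :=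
    (Equiv.sumArrowEquivProdArrow _ _ _).symm.trans
      ((Equiv.sumCompl p).arrowCongr (Equiv.refl _)) with he
  have he_pos : ∀ (g : {x // p x} → Fin q) (h : {x // ¬p x} → Fin q) (x : α) (hx : p x),
      e (g, h) x = g ⟨x, hx⟩ := by
    intro g h x hx
    simp [he, Equiv.sumArrowEquivProdArrow, Equiv.sumCompl_symm_apply_of_pos hx]
  have he_neg : ∀ (g : {x // p x} → Fin q) (h : {x // ¬p x} → Fin q) (x : α) (hx : ¬ p x),
      e (g, h) x = h ⟨x, hx⟩ := by
    intro g h x hx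
    simp [he, Equiv.sumArrowEquivProdArrow, Equiv.sumCompl_symm_apply_of_neg hx]
  rw [← Equiv.sum_comp e (fun f => ∏ i, O (f i) (f (σ i))), Fintype.sum_prod_type,
    Fintype.sum_mul_sum]
  refine Finset.sum_congr rfl fun g _ => Finset.sum_congr rfl fun h _ => ?_
  rw [← Fintype.prod_subtype_mul_prod_subtype p
    (fun i => O ((e (g, h)) i) ((e (g, h)) (σ i)))]
  congr 1
  · refine Finset.prod_congr rfl fun i _ => ?_
    rw [he_pos g h i i.2, he_pos g h (σ i) ((hp i).1 i.2)]
    rfl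
  · refine Finset.prod_congr rfl fun i _ => ?_
    rw [he_neg g h i i.2, he_neg g h (σ i) (fun hσ => i.2 ((hp i).2 hσ))]
    rfl

lemma cycle_sum {β : Type} [Fintype β] [DecidableEq β] (ρ : Equiv.Perm β)
    (hρ : ρ.IsCycle) (hfix : ∀ x, ρ x ≠ x) :
    ∑ f : β → Fin q, ∏ i, O (f i) (f (ρ i)) = (O ^ Fintype.card β).trace := by
  classical
  have hsupp : ρ.support = Finset.univ :=
    Finset.eq_univ_iff_forall.2 fun x => Equiv.Perm.mem_support.2 (hfix x)
  obtain ⟨a, ha, -⟩ := id hρ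
  have hne : Nonempty β := ⟨a⟩
  obtain ⟨m, hm⟩ : ∃ m, Fintype.card β = m + 1 :=
    ⟨Fintype.card β - 1, by have := Fintype.card_pos (α := β); omega⟩
  have hord : orderOf ρ = m + 1 := by
    rw [hρ.orderOf, hsupp, Finset.card_univ, hm]
  have hinj : Function.Injective (fun k : Fin (m+1) => (ρ ^ (k : ℕ)) a) := by
    intro i j hij
    wlog hle : (i : ℕ) ≤ (j : ℕ) generalizing i j
    · exact (this hij.symm (le_of_not_ge hle)).symm
    simp only at hij
    have h1 : (ρ ^ ((j : ℕ) - (i : ℕ))) ((ρ ^ (i : ℕ)) a) = (ρ ^ (i : ℕ)) a := by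
      rw [← Equiv.Perm.mul_apply, ← pow_add, Nat.sub_add_cancel hle, hij]
    have h2 : ρ ^ ((j : ℕ) - (i : ℕ)) = 1 :=
      (hρ.pow_eq_one_iff' (hfix ((ρ ^ (i : ℕ)) a))).2 h1
    have h3 : orderOf ρ ∣ (j : ℕ) - (i : ℕ) := orderOf_dvd_of_pow_eq_one h2
    have h4 : (j : ℕ) - (i : ℕ) = 0 :=
      Nat.eq_zero_of_dvd_of_lt h3 (by have := j.2; omega) |> fun h => h
    exact Fin.ext (le_antisymm hle (by omega))
  have hbij : Function.Bijective (fun k : Fin (m+1) => (ρ ^ (k : ℕ)) a) :=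
    (Fintype.bijective_iff_injective_and_card _).2 ⟨hinj, by simp [hm]⟩
  set e : Fin (m+1) ≃ β := Equiv.ofBijective _ hbij with hedef
  have he : ∀ k : Fin (m+1), e k = (ρ ^ (k : ℕ)) a := fun k => rfl
  have hstep : ∀ k : Fin (m+1), ρ (e k) = e (k + 1) := by
    intro k
    rw [he, he, ← Equiv.Perm.mul_apply, ← pow_succ']
    rcases eq_or_ne k (Fin.last m) with hk | hk
    · subst hk
      rw [Fin.last_add_one]
      have : (m : ℕ) + 1 = orderOf ρ := hord.symm
      simp only [Fin.val_last, Fin.val_zero, pow_zero]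
      rw [this, pow_orderOf_eq_one]
    · rw [Fin.val_add_one_of_lt (lt_of_le_of_ne (Fin.le_last k) hk)]
  set T : (β → Fin q) ≃ (Fin (m+1) → Fin q) :=
    Equiv.arrowCongr e.symm (Equiv.refl _) with hT
  have hTf : ∀ (f : β → Fin q) (k : Fin (m+1)), T f k = f (e k) := by
    intro f k; simp [hT]
  have key : ∀ f : β → Fin q,
      ∏ i, O (f i) (f (ρ i)) = ∏ k : Fin (m+1), O (T f k) (T f (k + 1)) := by
    intro f
    rw [← Equiv.prod_comp e (fun i => O (f i) (f (ρ i)))]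
    refine Finset.prod_congr rfl fun k _ => ?_
    rw [hTf, hTf, hstep]
  calc ∑ f : β → Fin q, ∏ i, O (f i) (f (ρ i))
      = ∑ f : β → Fin q, ∏ k : Fin (m+1), O (T f k) (T f (k + 1)) :=
        Finset.sum_congr rfl fun f _ => key f
    _ = ∑ g : Fin (m+1) → Fin q, ∏ k : Fin (m+1), O (g k) (g (k + 1)) :=
        Equiv.sum_comp T (fun g => ∏ k : Fin (m+1), O (g k) (g (k + 1)))
    _ = (O ^ Fintype.card β).trace := by rw [hm]; exact cyclic_sum O m

lemma main_aux (n : ℕ) : ∀ (α : Type) [Fintype α] [DecidableEq α] (σ : Equiv.Perm α),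
    σ.support.card ≤ n →
    ∑ f : α → Fin q, ∏ i, O (f i) (f (σ i)) =
      O.trace ^ ((Finset.univ.filter fun i => σ i = i).card) *
        (σ.cycleType.map fun ℓ => (O ^ ℓ).trace).prod := by
  induction n using Nat.strong_induction_on with
  | _ n IH =>
    intro α _ _ σ hcard
    rcases eq_or_ne σ 1 with rfl | hσ1
    · simp only [Equiv.Perm.one_apply, Equiv.Perm.cycleType_one, Multiset.map_zero,
        Multiset.prod_zero, mul_one]
      rw [Finset.filter_true, Finset.card_univ]
      exact base_sum O α
    · obtain ⟨c, hc⟩ : ∃ c, c ∈ σ.cycleFactorsFinset := by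
        by_contra h
        push_neg at h
        exact hσ1 (Equiv.Perm.cycleFactorsFinset_eq_empty_iff.1
          (Finset.eq_empty_iff_forall_notMem.2 h))
      have hcmem := Equiv.Perm.mem_cycleFactorsFinset_iff.1 hc
      have hcyc : c.IsCycle := hcmem.1
      have hagree : ∀ a ∈ c.support, c a = σ a := hcmem.2
      set s := c.support with hs
      have hsub : s ⊆ σ.support := Equiv.Perm.mem_cycleFactorsFinset_support_le hc
      have hfwd : ∀ x ∈ s, σ x ∈ s := fun x hx => by
        rw [← hagree x hx]; exact Equiv.Perm.apply_mem_support.2 hx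
      have himg : Finset.image σ s = s := by
        apply Finset.eq_of_subset_of_card_le
        · intro y hy
          obtain ⟨x, hx, rfl⟩ := Finset.mem_image.1 hy
          exact hfwd x hx
        · rw [Finset.card_image_of_injective _ σ.injective]
      have hp : ∀ x, x ∈ s ↔ σ x ∈ s := by
        intro x
        refine ⟨hfwd x, fun hσx => ?_⟩
        rw [← himg] at hσx
        obtain ⟨y, hy, hxy⟩ := Finset.mem_image.1 hσx
        rwa [← σ.injective hxy]
      have hsplit := sum_split O σ (fun x => x ∈ s) hp
      set ρ := σ.subtypePerm (fun x => (hp x).symm) with hρdef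
      set σ' := σ.subtypePerm (p := fun x => ¬ x ∈ s) (fun x => not_congr (hp x).symm) with hσ'def
      -- ρ is a cycle without fixed points
      have hρfix : ∀ x : {x // x ∈ s}, ρ x ≠ x := by
        intro x hEq
        have : σ (x : α) = (x : α) := congrArg Subtype.val hEq
        exact (Equiv.Perm.mem_support.1 (hsub x.2)) this
      have hcOn : c.IsCycleOn (s : Set α) := by
        have := hcyc.isCycleOn
        rwa [show {x | c x ≠ x} = (s : Set α) by
          ext x; simp [hs, Equiv.Perm.mem_support]] at this
      have hnt : (s : Set α).Nontrivial :=
        Finset.one_lt_card_iff_nontrivial.1 hcyc.two_le_card_support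
      have hρcyc : ρ.IsCycle := by
        have h0 := hcOn.isCycle_subtypePerm hnt
        have : (c.subtypePerm fun _ => hcOn.apply_mem_iff : Equiv.Perm (s : Set α)) = ρ := by
          apply Equiv.ext
          intro x
          exact Subtype.ext (hagree x.1 x.2)
        rwa [this] at h0
      -- value of the cycle part
      have hA := cycle_sum O ρ hρcyc hρfix
      have hcards : Fintype.card {x // x ∈ s} = s.card := Fintype.card_coe s
      -- support bound for σ'
      have hσ'sub : σ'.support.card ≤ (σ.support \ s).card := by
        refine Finset.card_le_card_of_injOn (fun x => (x : α)) ?_ ?_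
        · intro x hx
          rw [Finset.mem_coe, Finset.mem_sdiff]
          exact ⟨Equiv.Perm.mem_support.2 fun hEq =>
            Equiv.Perm.mem_support.1 hx (Subtype.ext hEq), x.2⟩
        · intro a _ b _ h
          exact Subtype.ext h
      have hslt : 2 ≤ s.card := hcyc.two_le_card_support
      have hσ'card : σ'.support.card < n := by
        have h1 := Finset.card_sdiff_of_subset hsub
        have h2 := Finset.card_le_card hsub
        omega
      have hB := IH σ'.support.card hσ'card {x // ¬ x ∈ s} σ' le_rfl
      -- fixed point counts agree
      have hfixcount : (Finset.univ.filter fun i : α => σ i = i).card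
          = (Finset.univ.filter fun i : {x // ¬ x ∈ s} => σ' i = i).card := by
        rw [← Fintype.card_subtype, ← Fintype.card_subtype]
        exact Fintype.card_congr
          { toFun := fun x => ⟨⟨x.1, fun hxs =>
              Equiv.Perm.mem_support.1 (hsub hxs) x.2⟩, Subtype.ext x.2⟩
            invFun := fun y => ⟨(y.1 : α), congrArg Subtype.val y.2⟩
            left_inv := fun x => rfl
            right_inv := fun y => rfl }
      -- cycle type decomposition
      have hτ : σ = c * Equiv.Perm.ofSubtype σ' := by
        apply Equiv.ext
        intro x
        by_cases hx : x ∈ s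
        · rw [Equiv.Perm.mul_apply,
            Equiv.Perm.ofSubtype_apply_of_not_mem σ' (not_not_intro hx), hagree x hx]
        · have h1 : Equiv.Perm.ofSubtype σ' x = σ x := by
            rw [Equiv.Perm.ofSubtype_apply_of_mem σ' hx]
            rfl
          rw [Equiv.Perm.mul_apply, h1]
          have h2 : σ x ∉ s := fun hσx => hx ((hp x).2 hσx)
          exact (Equiv.Perm.notMem_support.1 (fun hmem => h2 (hs ▸ hmem))).symm
      have hdisj : c.Disjoint (Equiv.Perm.ofSubtype σ') := by
        intro x
        by_cases hx : x ∈ s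
        · exact Or.inr (Equiv.Perm.ofSubtype_apply_of_not_mem σ' (not_not_intro hx))
        · exact Or.inl (Equiv.Perm.notMem_support.1 (fun hmem => hx (hs ▸ hmem)))
      have hct : σ.cycleType = s.card ::ₘ σ'.cycleType := by
        rw [hτ, hdisj.cycleType_mul, hcyc.cycleType, Equiv.Perm.cycleType_ofSubtype]
        rfl
      rw [hfixcount, hct]
      refine hsplit.trans ?_
      have einst : (Subtype.fintype fun x => x ∈ s) = (Finset.Subtype.fintype s) :=
        Subsingleton.elim _ _
      rw [einst]
      refine (congrArg₂ (· * ·) hA hB).trans ?_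
      rw [hcards]
      simp only [Multiset.map_cons, Multiset.prod_cons]
      ring

/-- For `t ≥ 1`, `q ≥ 1`, a permutation `σ` of `Fin t` and a `q×q`
complex matrix `O`, `Σ_{f : Fin t → Fin q} ∏_i O (f i) (f (σ i))
  = (tr O)^{f₀} · ∏_{ℓ ∈ cycleType σ} tr(O^ℓ)`,
where `f₀` is the number of fixed points of `σ` and the product runs over the multiset
of nontrivial cycle lengths of `σ`.  (This is the trace of the permutation operator of
`σ` composed with `O^{⊗t}` on `(ℂ^q)^{⊗t}`.) -/
theorem trace_perm_tensor_pow (t q : ℕ) (ht : 1 ≤ t) (hq : 1 ≤ q)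
    (σ : Equiv.Perm (Fin t)) (O : Matrix (Fin q) (Fin q) ℂ) :
    ∑ f : Fin t → Fin q, ∏ i, O (f i) (f (σ i)) =
      O.trace ^ ((Finset.univ.filter fun i => σ i = i).card) *
        (σ.cycleType.map fun ℓ => (O ^ ℓ).trace).prod := by
  exact main_aux O σ.support.card (Fin t) σ le_rfl
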